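/- Let 0 < v < 1, 0 < α ≤ 1, and 0 < β ≤ α·v (so β < α), and set θ := (α·v − β)/(α − β). Then ∫_0^{θ} (1 − β/(v−x)) dx + ∫_{θ}^{1−α} (1 − α/(1−x)) dx = α·ln((α−β)/(1−v)) + 1 − α + β·ln(β·(1−v)/(v·(α−β))). (Here the second integral is the signed integral from θ to 1−α; note θ < v and both θ and 1−α lie in [0,1).) -/

import Mathlib

open MeasureTheory



lemma integral_one_sub_div (a b c d : ℝ) (ha : a < d) (hb : b < d) :
    ∫ x in a..b, (1 - c / (d - x)) = (b - a) - c * Real.log ((d - a) / (d - b)) := by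
  have hlt : ∀ x ∈ Set.uIcc a b, x < d := by
    intro x hx
    rw [Set.uIcc_eq_union] at hx
    rcases hx with h | h
    · exact lt_of_le_of_lt h.2 hb
    · exact lt_of_le_of_lt h.2 ha
  have hcont : ContinuousOn (fun x => c / (d - x)) (Set.uIcc a b) := by
    apply ContinuousOn.div continuousOn_const (by fun_prop)
    intro x hx
    exact sub_ne_zero.2 (ne_of_gt (hlt x hx))
  rw [intervalIntegral.integral_sub intervalIntegrable_const
      (hcont.intervalIntegrable)]
  have h2 : ∫ x in a..b, c / (d - x) = c * Real.log ((d - a) / (d - b)) := by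
    simp_rw [div_eq_mul_inv]
    rw [intervalIntegral.integral_const_mul]
    have := intervalIntegral.integral_comp_sub_left (a := a) (b := b)
      (fun x : ℝ => x⁻¹) d
    rw [this, integral_inv]
    · congr 1
    · intro h
      rw [Set.uIcc_eq_union] at h
      rcases h with h | h <;> linarith [h.1, h.2]
  rw [h2]
  simp


/-- Evaluation of the integral lower-bounding the expected highest bid in a two-bidder
coarse correlated equilibrium, in the case `β < v·α`, where
`θ = (αv - β)/(α - β)` is the crossing point of `β/(v-x)` and `α/(1-x)`:
`∫_0^θ (1 - β/(v-x)) dx + ∫_θ^{1-α} (1 - α/(1-x)) dx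
  = α·ln((α-β)/(1-v)) + 1 - α + β·ln(β(1-v)/(v(α-β)))`. -/
theorem crossing_integral_eval (v α β θ : ℝ)
    (hv0 : 0 < v) (hv1 : v < 1) (hα0 : 0 < α) (hα1 : α ≤ 1)
    (hβ0 : 0 < β) (hβ : β ≤ α * v)
    (hθ : θ = (α * v - β) / (α - β)) :
    (∫ x in (0:ℝ)..θ, (1 - β / (v - x))) + (∫ x in θ..(1 - α), (1 - α / (1 - x)))
      = α * Real.log ((α - β) / (1 - v)) + 1 - α
        + β * Real.log (β * (1 - v) / (v * (α - β))) := by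
  have hβα : β < α := lt_of_le_of_lt hβ (by nlinarith)
  have hαβ : 0 < α - β := by linarith
  have hvθ : v - θ = β * (1 - v) / (α - β) := by
    rw [hθ]; field_simp; ring
  have h1θ : 1 - θ = α * (1 - v) / (α - β) := by
    rw [hθ]; field_simp; ring
  have hθv : θ < v := by nlinarith [div_pos (by nlinarith : 0 < β * (1 - v)) hαβ]
  have hθ1 : θ < 1 := lt_trans hθv hv1
  rw [integral_one_sub_div 0 θ β v hv0 hθv,
      integral_one_sub_div θ (1 - α) α 1 hθ1 (by linarith)]
  have e1 : (v - 0) / (v - θ) = v * (α - β) / (β * (1 - v)) := by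
    rw [hvθ]; field_simp; simp
  have e2 : (1 - θ) / (1 - (1 - α)) = (1 - v) / (α - β) := by
    rw [h1θ, sub_sub_cancel, mul_div_assoc, mul_div_cancel_left₀ _ hα0.ne']
  rw [e1, e2]
  have l1 : Real.log (v * (α - β) / (β * (1 - v)))
      = - Real.log (β * (1 - v) / (v * (α - β))) := by
    rw [← Real.log_inv]; congr 1
    field_simp
  have l2 : Real.log ((1 - v) / (α - β)) = - Real.log ((α - β) / (1 - v)) := by
    rw [← Real.log_inv]; congr 1
    field_simp
  rw [l1, l2]; ring
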